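/- Let r > 0, α* := 1/√(1+4r²), and let A be the section-area function of the 3-dimensional cylinder Z = [-1/2,1/2] × r·B₂² as in Lemma (3D cylinder formula). For α ∈ (α*, 1), the equation A'(α) = 0 is equivalent, under the substitution x = √(1-α²)/(2αr) (equivalently α = 1/√(1+4r²x²)), to the equation arcsin(x)/x = (1 + 8r²x²)·√(1-x²) for x ∈ (0,1). -/

import Mathlib

open Real

private lemma alg (r α x t w : ℝ) (hr : r ≠ 0) (hα : α ≠ 0) (hx : x ≠ 0) (ht : t ≠ 0)
    (h1 : (1:ℝ) - α^2 ≠ 0)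
    (h4 : 4*α^2*r^2*x^2 = 1 - α^2) (ht2 : t^2 = 1 - x^2) :
    r * (-(α^2)⁻¹) * t + r / α * ((1/(2*α^3*r^2)) / (2*t)) +
      ((0 * (2*α*r*x) - 2*r^2 * (-(2*α) / (2*(2*α*r*x)))) / (2*α*r*x)^2 * w +
        2*r^2 / (2*α*r*x) * (1 / t *
          ((-(2*α) / (2*(2*α*r*x)) * (2*α*r) - (2*α*r*x) * (2*1*r)) / (2*α*r)^2)))
      = r / (1-α^2) * (w / x - (1+8*r^2*x^2)*t) := by
  rw [← h4]
  field_simp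
  linear_combination (4*α^2*x + 16*r^2*α^2*x^3) * ht2 - 4*x^3 * h4


theorem deriv_zero_iff_equation (r : ℝ) (hr : 0 < r)
    (A : ℝ → ℝ)
    (hA : ∀ α : ℝ, α ∈ Set.Ioo (1 / Real.sqrt (1 + 4 * r^2)) 1 →
      A α = r / α * Real.sqrt (1 - (1 - α^2) / (4 * α^2 * r^2)) +
        2 * r^2 / Real.sqrt (1 - α^2) *
          Real.arcsin (Real.sqrt (1 - α^2) / (2 * α * r)))
    (α : ℝ) (hα : α ∈ Set.Ioo (1 / Real.sqrt (1 + 4 * r^2)) 1) :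
    deriv A α = 0 ↔
      (let x := Real.sqrt (1 - α^2) / (2 * α * r);
        Real.arcsin x / x = (1 + 8 * r^2 * x^2) * Real.sqrt (1 - x^2)) := by
  obtain ⟨hαl, hαu⟩ := hα
  have hr2 : (0:ℝ) < 1 + 4 * r^2 := by positivity
  have hαpos : 0 < α := lt_trans (by positivity) hαl
  have h1α : 0 < 1 - α^2 := by nlinarith
  have hs : 0 < Real.sqrt (1 - α^2) := Real.sqrt_pos.mpr h1α
  have hs2 : Real.sqrt (1 - α^2) ^ 2 = 1 - α^2 := Real.sq_sqrt h1α.le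
  set s := Real.sqrt (1 - α^2) with hs_def
  set x := s / (2 * α * r) with hx_def
  have hx : 0 < x := div_pos hs (by positivity)
  have hαsq : 1 / (1 + 4*r^2) < α^2 := by
    have h := pow_lt_pow_left₀ hαl (by positivity) two_ne_zero
    rwa [div_pow, one_pow, Real.sq_sqrt hr2.le] at h
  have hx1 : x < 1 := by
    rw [hx_def, div_lt_one (by positivity)]
    have h2 : s^2 < (2*α*r)^2 := by
      rw [hs2]; nlinarith [(div_lt_iff₀ hr2).mp hαsq]
    exact lt_of_pow_lt_pow_left₀ 2 (by positivity) h2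
  have hxs : s = 2*α*r*x := by rw [hx_def]; field_simp
  have h4 : 4*α^2*r^2*x^2 = 1 - α^2 := by
    have := hs2; rw [hxs] at this; nlinarith [this]
  have h1x : 0 < 1 - x^2 := by nlinarith
  have ht : 0 < Real.sqrt (1 - x^2) := Real.sqrt_pos.mpr h1x
  have ht2 : Real.sqrt (1 - x^2) ^ 2 = 1 - x^2 := Real.sq_sqrt h1x.le
  set t := Real.sqrt (1 - x^2) with ht_def
  have hu : 1 - (1 - α^2) / (4 * α^2 * r^2) = 1 - x^2 := by
    rw [← h4]; field_simp
  have htv : Real.sqrt (1 - (1 - α^2) / (4 * α^2 * r^2)) = t := by rw [hu]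
  -- derivative pieces
  have h1 : HasDerivAt (fun a : ℝ => r / a) (r * (-(α^2)⁻¹)) α := by
    simpa [div_eq_mul_inv] using (hasDerivAt_inv hαpos.ne').const_mul r
  have hnum : HasDerivAt (fun a : ℝ => 1 - a^2) (-(2*α)) α := by
    simpa using (hasDerivAt_pow 2 α).const_sub 1
  have hden : HasDerivAt (fun a : ℝ => 4*a^2*r^2) (4*(2*α)*r^2) α := by
    exact ((hasDerivAt_pow 2 α).const_mul 4).mul_const (r^2) |>.congr_deriv (by ring)
  have hden0 : (4*α^2*r^2) ≠ 0 := by positivity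
  have hu' : HasDerivAt (fun a : ℝ => 1 - (1 - a^2) / (4 * a^2 * r^2))
      (1/(2*α^3*r^2)) α := by
    have h : HasDerivAt (fun a : ℝ => 1 - (1 - a^2) / (4 * a^2 * r^2)) _ α := (hnum.div hden hden0).const_sub 1
    convert h using 1
    field_simp
    ring
  have hu0 : (1 - (1 - α^2) / (4 * α^2 * r^2)) ≠ 0 := by rw [hu]; exact h1x.ne'
  have hsqrtu : HasDerivAt (fun a : ℝ => Real.sqrt (1 - (1 - a^2) / (4 * a^2 * r^2)))
      ((1/(2*α^3*r^2)) / (2*t)) α := by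
    simpa only [htv] using hu'.sqrt hu0
  have hT1 : HasDerivAt (fun a : ℝ => r / a * Real.sqrt (1 - (1 - a^2) / (4 * a^2 * r^2)))
      (r * (-(α^2)⁻¹) * t + r / α * ((1/(2*α^3*r^2)) / (2*t))) α := by
    have h := h1.mul hsqrtu
    rw [htv] at h
    exact h
  have hsder : HasDerivAt (fun a : ℝ => Real.sqrt (1 - a^2)) (-(2*α) / (2*s)) α :=
    hnum.sqrt h1α.ne'
  have hcs : HasDerivAt (fun a : ℝ => 2*r^2 / Real.sqrt (1 - a^2))
      ((0 * s - 2*r^2 * (-(2*α) / (2*s))) / s^2) α :=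
    (hasDerivAt_const α (2*r^2)).div hsder hs.ne'
  have hden2 : HasDerivAt (fun a : ℝ => 2*a*r) (2*1*r) α :=
    ((hasDerivAt_id α).const_mul 2).mul_const r
  have hxfun : HasDerivAt (fun a : ℝ => Real.sqrt (1 - a^2) / (2*a*r))
      ((-(2*α) / (2*s) * (2*α*r) - s * (2*1*r)) / (2*α*r)^2) α :=
    hsder.div hden2 (by positivity)
  have harc : HasDerivAt (fun a : ℝ => Real.arcsin (Real.sqrt (1 - a^2) / (2*a*r)))
      (1 / t * ((-(2*α) / (2*s) * (2*α*r) - s * (2*1*r)) / (2*α*r)^2)) α := by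
    have h := (Real.hasDerivAt_arcsin (by linarith : x ≠ -1) hx1.ne).comp α hxfun
    simpa [← ht_def, Function.comp_def] using h
  have hT2 : HasDerivAt (fun a : ℝ =>
      2*r^2 / Real.sqrt (1 - a^2) * Real.arcsin (Real.sqrt (1 - a^2) / (2*a*r)))
      ((0 * s - 2*r^2 * (-(2*α) / (2*s))) / s^2 * Real.arcsin x +
        2*r^2 / s * (1 / t * ((-(2*α) / (2*s) * (2*α*r) - s * (2*1*r)) / (2*α*r)^2))) α :=
    hcs.mul harc
  have hF := hT1.add hT2
  have hAF : deriv A α = r * (-(α^2)⁻¹) * t + r / α * ((1/(2*α^3*r^2)) / (2*t)) +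
      ((0 * s - 2*r^2 * (-(2*α) / (2*s))) / s^2 * Real.arcsin x +
        2*r^2 / s * (1 / t * ((-(2*α) / (2*s) * (2*α*r) - s * (2*1*r)) / (2*α*r)^2))) := by
    rw [← hF.deriv]
    apply Filter.EventuallyEq.deriv_eq
    filter_upwards [Ioo_mem_nhds hαl hαu] with a ha
    exact hA a ha
  have hfac : r * (-(α^2)⁻¹) * t + r / α * ((1/(2*α^3*r^2)) / (2*t)) +
      ((0 * s - 2*r^2 * (-(2*α) / (2*s))) / s^2 * Real.arcsin x +
        2*r^2 / s * (1 / t * ((-(2*α) / (2*s) * (2*α*r) - s * (2*1*r)) / (2*α*r)^2)))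
      = r / (1-α^2) * (Real.arcsin x / x - (1+8*r^2*x^2)*t) := by
    rw [hxs]
    exact alg r α x t (Real.arcsin x) hr.ne' hαpos.ne' hx.ne' ht.ne' h1α.ne' h4 ht2
  rw [hAF, hfac]
  have hc : r / (1-α^2) ≠ 0 := by positivity
  rw [mul_eq_zero, sub_eq_zero]
  simp only [hc, false_or]
  exact Iff.rfl
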